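/- In an edge-transitive graph, every induced path on four vertices closes to an induced cycle. -/

import Mathlib

open SimpleGraph

/-- A walk `c` from `v` to `v` is an induced (chordless) cycle if it is a cycle and
every edge of the graph between vertices of the cycle is an edge of the cycle. -/
def IsInducedCycle {V : Type*} (G : SimpleGraph V) {v : V} (c : G.Walk v v) : Prop :=
  c.IsCycle ∧ ∀ x ∈ c.support, ∀ y ∈ c.support, G.Adj x y → s(x, y) ∈ c.edges

/-- A vertex `v` is avoidable if every induced path `x - v - y` on three vertices
closes to an induced cycle. -/
def Avoidable {V : Type*} (G : SimpleGraph V) (v : V) : Prop :=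
  ∀ x y : V, G.Adj v x → G.Adj v y → x ≠ y → ¬ G.Adj x y →
    ∃ c : G.Walk v v, IsInducedCycle G c ∧ s(x, v) ∈ c.edges ∧ s(v, y) ∈ c.edges

namespace Stmt19

open scoped Classical

variable {V : Type*}

/-- Restriction of `G` to vertex set `s`. -/
def RG (G : SimpleGraph V) (s : Set V) : SimpleGraph V where
  Adj p q := G.Adj p q ∧ p ∈ s ∧ q ∈ s
  symm := ⟨fun _ _ ⟨h, ha, hb⟩ => ⟨h.symm, hb, ha⟩⟩
  loopless := ⟨fun a ⟨h, _, _⟩ => G.loopless.irrefl a h⟩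

lemma RG_adj {G : SimpleGraph V} {s : Set V} {p q : V} :
    (RG G s).Adj p q ↔ G.Adj p q ∧ p ∈ s ∧ q ∈ s := Iff.rfl

def Mset (G : SimpleGraph V) (u v : V) : Set V :=
  {w | ¬G.Adj u w ∧ ¬G.Adj v w ∧ w ≠ u ∧ w ≠ v}

def Valid (G : SimpleGraph V) (u v x y : V) : Prop :=
  G.Adj u v ∧ G.Adj u x ∧ G.Adj v y ∧ ¬G.Adj v x ∧ ¬G.Adj u y ∧ ¬G.Adj x y ∧
    x ≠ v ∧ y ≠ u ∧ x ≠ y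

def Closes (G : SimpleGraph V) (u v x y : V) : Prop :=
  (RG G ({x, y} ∪ Mset G u v)).Reachable x y

def EAvoid (G : SimpleGraph V) (u v : V) : Prop :=
  ∀ x y, Valid G u v x y → Closes G u v x y

lemma RG_walk_mem {G : SimpleGraph V} {s : Set V} :
    ∀ {a b : V}, (RG G s).Walk a b → a ∈ s → b ∈ s
  | _, _, Walk.nil, ha => ha
  | _, _, Walk.cons h p, _ => RG_walk_mem p h.2.2

lemma RG_walk_support {G : SimpleGraph V} {s : Set V} :
    ∀ {a b : V} (w : (RG G s).Walk a b), a ∈ s → ∀ z ∈ w.support, z ∈ s := by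
  intro a b w
  induction w with
  | nil =>
    intro ha z hz
    simp only [Walk.support_nil, List.mem_singleton] at hz
    exact hz ▸ ha
  | cons h p ih =>
    intro ha z hz
    simp only [Walk.support_cons, List.mem_cons] at hz
    rcases hz with rfl | hz
    · exact ha
    · exact ih h.2.2 z hz

lemma reach_of_adj_imp {G₁ G₂ : SimpleGraph V}
    (h : ∀ p q, G₁.Adj p q → G₂.Reachable p q) :
    ∀ {a b : V}, G₁.Reachable a b → G₂.Reachable a b := by
  intro a b hr
  obtain ⟨w⟩ := hr
  induction w with
  | nil => exact Reachable.refl _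
  | cons hadj p ih => exact (h _ _ hadj).trans ih

lemma exists_min_walk {G : SimpleGraph V} {a b : V} (h : G.Reachable a b) :
    ∃ w : G.Walk a b, ∀ w' : G.Walk a b, w.length ≤ w'.length := by
  obtain ⟨w0⟩ := h
  have hex : ∃ n, ∃ w : G.Walk a b, w.length = n := ⟨w0.length, w0, rfl⟩
  obtain ⟨w, hw⟩ := Nat.find_spec hex
  exact ⟨w, fun w' => hw ▸ Nat.find_min' hex ⟨w', rfl⟩⟩

lemma min_walk_isPath {G : SimpleGraph V} :
    ∀ {a b : V} (w : G.Walk a b), (∀ w' : G.Walk a b, w.length ≤ w'.length) → w.IsPath := by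
  intro a b w
  induction w with
  | nil => intro _; exact Walk.IsPath.nil
  | cons h p ih =>
    intro hmin
    rename_i u c b
    have hminp : ∀ w' : G.Walk c b, p.length ≤ w'.length := by
      intro w'
      have := hmin (Walk.cons h w')
      simpa [Walk.length_cons] using this
    have hns : u ∉ p.support := by
      intro hu
      have hle := hmin (p.dropUntil u hu)
      have := Walk.length_dropUntil_le p hu
      simp [Walk.length_cons] at hle
      omega
    exact (ih hminp).cons hns

lemma walk_length_one_edge {G : SimpleGraph V} {p q : V} :
    ∀ (w : G.Walk p q), w.length = 1 → s(p, q) ∈ w.edges := by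
  intro w
  cases w with
  | nil => intro h; simp at h
  | cons h rest =>
    intro hl
    simp only [Walk.length_cons] at hl
    have h0 : _ = 0 := Nat.succ_injective hl
    have := Walk.eq_of_length_eq_zero h0
    subst this
    simp

lemma min_walk_chord {G : SimpleGraph V} :
    ∀ {a b : V} (w : G.Walk a b), (∀ w' : G.Walk a b, w.length ≤ w'.length) →
      ∀ p q, p ∈ w.support → q ∈ w.support → G.Adj p q → s(p, q) ∈ w.edges := by
  intro a b w
  induction w with
  | nil =>
    intro _ p q hp hq hadj
    simp only [Walk.support_nil, List.mem_singleton] at hp hq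
    subst hp; subst hq
    exact absurd hadj (G.loopless.irrefl _)
  | cons h rest ih =>
    intro hmin p q hp hq hadj
    rename_i u c b
    have hminr : ∀ w' : G.Walk c b, rest.length ≤ w'.length := by
      intro w'
      have := hmin (Walk.cons h w')
      simpa [Walk.length_cons] using this
    simp only [Walk.support_cons, List.mem_cons] at hp hq
    rcases hp with rfl | hp'
    · rcases hq with rfl | hq'
      · exact absurd hadj (G.loopless.irrefl _)
      · -- p = u, q ∈ rest.support
        have hle := hmin (Walk.cons hadj (rest.dropUntil q hq'))
        have hts := congrArg Walk.length (rest.take_spec hq')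
        rw [Walk.length_append] at hts
        simp only [Walk.length_cons] at hle
        have h0 : (rest.takeUntil q hq').length = 0 := by omega
        have hcq : c = q := Walk.eq_of_length_eq_zero h0
        subst hcq
        simp
    · rcases hq with rfl | hq'
      · -- q = u, p ∈ rest.support
        have hle := hmin (Walk.cons hadj.symm (rest.dropUntil p hp'))
        have hts := congrArg Walk.length (rest.take_spec hp')
        rw [Walk.length_append] at hts
        simp only [Walk.length_cons] at hle
        have h0 : (rest.takeUntil p hp').length = 0 := by omega
        have hcp : c = p := Walk.eq_of_length_eq_zero h0
        subst hcp
        simp [Sym2.eq_swap]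
      · exact List.mem_cons_of_mem _ (ih hminr p q hp' hq' hadj)



noncomputable def supp [Fintype V] (G : SimpleGraph V) : Finset V :=
  Finset.univ.filter (fun v => ∃ w, G.Adj v w)

lemma mem_supp [Fintype V] {G : SimpleGraph V} {v : V} :
    v ∈ supp G ↔ ∃ w, G.Adj v w := by
  simp [supp]

theorem exists_avoid [Fintype V] :
    ∀ (n : ℕ) (G : SimpleGraph V) (S : Set V),
      (supp G).card ≤ n →
      (∀ s ∈ S, ∀ t ∈ S, s ≠ t → G.Adj s t) →
      (∀ s ∈ S, ∃ w, G.Adj s w) →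
      (∃ a b, G.Adj a b ∧ a ∉ S ∧ b ∉ S) →
      ∃ u v, G.Adj u v ∧ u ∉ S ∧ v ∉ S ∧ EAvoid G u v := by
  intro n
  induction n with
  | zero =>
    intro G S hcard _ _ hedge
    obtain ⟨a, b, hab, -, -⟩ := hedge
    exfalso
    have : a ∈ supp G := mem_supp.2 ⟨b, hab⟩
    have := Finset.card_pos.2 ⟨a, this⟩
    omega
  | succ n ih =>
    intro G S hcard hSclq hSsupp hedge
    obtain ⟨a0, b0, hab0, ha0, hb0⟩ := hedge
    by_cases hHW : ∀ (Q : Finset V), Q.Nonempty →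
        (∀ q ∈ Q, ∀ q' ∈ Q, q ≠ q' → G.Adj q q') →
        (∀ q ∈ Q, ∃ w, G.Adj q w) →
        ∀ c d, G.Adj c d → (∀ q ∈ Q, ¬G.Adj q c ∧ c ≠ q) →
          (∀ q ∈ Q, ¬G.Adj q d ∧ d ≠ q) →
          ∃ s ∈ S, ∀ q ∈ Q, ¬G.Adj q s ∧ s ≠ q
    · -- HARD branch
      set E : Finset (V × V) :=
        Finset.univ.filter (fun p => G.Adj p.1 p.2 ∧ p.1 ∉ S ∧ p.2 ∉ S) with hE
      have hEne : E.Nonempty := ⟨(a0, b0), by simp [hE, hab0, ha0, hb0]⟩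
      obtain ⟨e, heE, hemin⟩ := E.exists_min_image
        (fun p => (Finset.univ.filter (fun w => G.Adj p.1 w ∨ G.Adj p.2 w)).card) hEne
      obtain ⟨a, b⟩ := e
      simp only [hE, Finset.mem_filter, Finset.mem_univ, true_and] at heE
      obtain ⟨hab, haS, hbS⟩ := heE
      refine ⟨a, b, hab, haS, hbS, ?_⟩
      intro x y hval
      obtain ⟨-, hax, hby, hbx, hay, hxy, hxb, hya, hxyne⟩ := hval
      have hxa : x ≠ a := hax.ne'
      have hyb : y ≠ b := hby.ne'
      have hbxne : b ≠ x := fun h => hxb h.symm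
      have hxS : x ∉ S := by
        intro hxSmem
        obtain ⟨s, hsS, hs⟩ := hHW {x} ⟨x, Finset.mem_singleton_self x⟩
          (by intro q hq q' hq' hne
              rw [Finset.mem_singleton] at hq hq'
              exact absurd (hq.trans hq'.symm) hne)
          (by intro q hq; rw [Finset.mem_singleton] at hq; subst hq; exact ⟨a, hax.symm⟩)
          b y hby
          (by intro q hq; rw [Finset.mem_singleton] at hq; subst hq
              exact ⟨fun h => hbx h.symm, hbxne⟩)
          (by intro q hq; rw [Finset.mem_singleton] at hq; subst hq
              exact ⟨hxy, hxyne.symm⟩)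
        have h1 := hs x (Finset.mem_singleton_self x)
        exact h1.1 (hSclq s hsS x hxSmem h1.2).symm
      have hyS : y ∉ S := by
        intro hySmem
        obtain ⟨s, hsS, hs⟩ := hHW {y} ⟨y, Finset.mem_singleton_self y⟩
          (by intro q hq q' hq' hne
              rw [Finset.mem_singleton] at hq hq'
              exact absurd (hq.trans hq'.symm) hne)
          (by intro q hq; rw [Finset.mem_singleton] at hq; subst hq; exact ⟨b, hby.symm⟩)
          x a hax.symm
          (by intro q hq; rw [Finset.mem_singleton] at hq; subst hq
              exact ⟨fun h => hxy h.symm, hxyne⟩)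
          (by intro q hq; rw [Finset.mem_singleton] at hq; subst hq
              exact ⟨fun h => hay h.symm, fun h => hya h.symm⟩)
        have h1 := hs y (Finset.mem_singleton_self y)
        exact h1.1 (hSclq s hsS y hySmem h1.2).symm
      have hz : ∃ z, G.Adj y z ∧ ¬G.Adj a z ∧ ¬G.Adj b z := by
        by_contra hc
        push_neg at hc
        have hsub : (Finset.univ.filter (fun w => G.Adj y w ∨ G.Adj b w)) ⊆
            (Finset.univ.filter (fun w => G.Adj a w ∨ G.Adj b w)) := by
          intro w hw
          simp only [Finset.mem_filter, Finset.mem_univ, true_and] at hw ⊢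
          rcases hw with hyw | hbw
          · by_cases haw : G.Adj a w
            · exact Or.inl haw
            · exact Or.inr (hc w hyw haw)
          · exact Or.inr hbw
        have hyE : (y, b) ∈ E := by
          simp only [hE, Finset.mem_filter, Finset.mem_univ, true_and]
          exact ⟨hby.symm, hyS, hbS⟩
        have hcard2 := hemin (y, b) hyE
        simp only at hcard2
        have heq := Finset.eq_of_subset_of_card_le hsub hcard2
        have hxW : x ∈ Finset.univ.filter (fun w => G.Adj a w ∨ G.Adj b w) := by
          simp only [Finset.mem_filter, Finset.mem_univ, true_and]
          exact Or.inl hax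
        rw [← heq] at hxW
        simp only [Finset.mem_filter, Finset.mem_univ, true_and] at hxW
        rcases hxW with h | h
        · exact hxy h.symm
        · exact hbx h
      obtain ⟨z, hyz, haz, hbz⟩ := hz
      have hza : z ≠ a := by
        intro h; subst h; exact hay hyz.symm
      have hzb : z ≠ b := by
        intro h; subst h; exact haz hab
      have hzy : z ≠ y := by
        intro h; subst h; exact G.loopless.irrefl z hyz
      have hzx : z ≠ x := by
        intro h; subst h; exact hxy hyz.symm
      by_cases hxz : G.Adj x z
      · have hzM : z ∈ ({x, y} ∪ Mset G a b : Set V) :=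
          Set.mem_union_right _ ⟨haz, hbz, hza, hzb⟩
        have hxM : x ∈ ({x, y} ∪ Mset G a b : Set V) :=
          Set.mem_union_left _ (by simp)
        have hyM : y ∈ ({x, y} ∪ Mset G a b : Set V) :=
          Set.mem_union_left _ (by simp)
        exact ((RG_adj.2 ⟨hxz, hxM, hzM⟩).reachable).trans
          (RG_adj.2 ⟨hyz.symm, hzM, hyM⟩).reachable
      · exfalso
        have hzS : z ∉ S := by
          intro hzSmem
          obtain ⟨s, hsS, hs⟩ := hHW {z} ⟨z, Finset.mem_singleton_self z⟩
            (by intro q hq q' hq' hne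
                rw [Finset.mem_singleton] at hq hq'
                exact absurd (hq.trans hq'.symm) hne)
            (by intro q hq; rw [Finset.mem_singleton] at hq; subst hq; exact ⟨y, hyz.symm⟩)
            x a hax.symm
            (by intro q hq; rw [Finset.mem_singleton] at hq; subst hq
                exact ⟨fun h => hxz h.symm, fun h => hzx h.symm⟩)
            (by intro q hq; rw [Finset.mem_singleton] at hq; subst hq
                exact ⟨fun h => haz h.symm, fun h => hza h.symm⟩)
          have h1 := hs z (Finset.mem_singleton_self z)
          exact h1.1 (hSclq s hsS z hzSmem h1.2).symm
        obtain ⟨s2, hs2S, hs2⟩ := hHW {y, z} ⟨y, by simp⟩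
          (by intro q hq q' hq' hne
              simp only [Finset.mem_insert, Finset.mem_singleton] at hq hq'
              rcases hq with rfl | rfl <;> rcases hq' with rfl | rfl
              · exact absurd rfl hne
              · exact hyz
              · exact hyz.symm
              · exact absurd rfl hne)
          (by intro q hq
              simp only [Finset.mem_insert, Finset.mem_singleton] at hq
              rcases hq with rfl | rfl
              · exact ⟨b, hby.symm⟩
              · exact ⟨y, hyz.symm⟩)
          x a hax.symm
          (by intro q hq
              simp only [Finset.mem_insert, Finset.mem_singleton] at hq
              rcases hq with rfl | rfl
              · exact ⟨fun h => hxy h.symm, hxyne⟩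
              · exact ⟨fun h => hxz h.symm, fun h => hzx h.symm⟩)
          (by intro q hq
              simp only [Finset.mem_insert, Finset.mem_singleton] at hq
              rcases hq with rfl | rfl
              · exact ⟨fun h => hay h.symm, fun h => hya h.symm⟩
              · exact ⟨fun h => haz h.symm, fun h => hza h.symm⟩)
        have hs2y := hs2 y (by simp)
        have hs2z := hs2 z (by simp)
        obtain ⟨s1, hs1S, hs1⟩ := hHW {s2} ⟨s2, Finset.mem_singleton_self s2⟩
          (by intro q hq q' hq' hne
              rw [Finset.mem_singleton] at hq hq'
              exact absurd (hq.trans hq'.symm) hne)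
          (by intro q hq; rw [Finset.mem_singleton] at hq; rw [hq]; exact hSsupp s2 hs2S)
          y z hyz
          (by intro q hq; rw [Finset.mem_singleton] at hq; rw [hq]
              exact ⟨fun h => hs2y.1 h.symm, fun h => hs2y.2 h.symm⟩)
          (by intro q hq; rw [Finset.mem_singleton] at hq; rw [hq]
              exact ⟨fun h => hs2z.1 h.symm, fun h => hs2z.2 h.symm⟩)
        have h1 := hs1 s2 (Finset.mem_singleton_self s2)
        exact h1.1 (hSclq s1 hs1S s2 hs2S h1.2).symm
    · -- recursion branch
      push_neg at hHW
      obtain ⟨Q, hQne, hQclq, hQsupp, c, d, hcd, hcQ, hdQ, hSQ⟩ := hHW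
      set amb : Set V := {w | ∀ q ∈ Q, ¬G.Adj q w ∧ w ≠ q} with hamb
      set C : Set V := {w | (RG G amb).Reachable c w} with hC
      set NC : Set V := {t | t ∉ C ∧ ∃ w ∈ C, G.Adj w t} with hNC
      set CN : Set V := C ∪ NC with hCN
      have hcamb : c ∈ amb := fun q hq => hcQ q hq
      have hdamb : d ∈ amb := fun q hq => hdQ q hq
      have hCamb : ∀ w ∈ C, w ∈ amb := by
        intro w hw
        obtain ⟨p⟩ := hw
        exact RG_walk_mem p hcamb
      have hcC : c ∈ C := Reachable.refl c
      have hdC : d ∈ C := (RG_adj.2 ⟨hcd, hcamb, hdamb⟩).reachable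
      have hQC : ∀ q ∈ Q, q ∉ C := fun q hq hqC => ((hCamb q hqC) q hq).2 rfl
      have hQNC : ∀ q ∈ Q, q ∉ NC := by
        rintro q hq ⟨_, w, hwC, hadj⟩
        exact ((hCamb w hwC) q hq).1 hadj.symm
      have hclose : ∀ w ∈ C, ∀ t, G.Adj w t → t ∈ CN := by
        intro w hwC t hadj
        by_cases htC : t ∈ C
        · exact Or.inl htC
        · by_cases htamb : t ∈ amb
          · exact absurd (hwC.trans (RG_adj.2 ⟨hadj, hCamb w hwC, htamb⟩).reachable) htC
          · exact Or.inr ⟨htC, w, hwC, hadj⟩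
      have hNCamb : ∀ t ∈ NC, ∃ q ∈ Q, G.Adj q t := by
        intro t ht
        obtain ⟨htC, w, hwC, hadj⟩ := ht
        by_cases htamb : t ∈ amb
        · exact absurd (hwC.trans (RG_adj.2 ⟨hadj, hCamb w hwC, htamb⟩).reachable) htC
        · have hex : ∃ q ∈ Q, ¬(¬G.Adj q t ∧ t ≠ q) := by
            by_contra hcon
            push_neg at hcon
            exact htamb (fun q hq => hcon q hq)
          obtain ⟨q, hq, hqt⟩ := hex
          by_cases hadjq : G.Adj q t
          · exact ⟨q, hq, hadjq⟩
          · have hteq : t = q := by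
              by_contra hne
              exact hqt ⟨hadjq, hne⟩
            exfalso
            rw [hteq] at hadj
            exact ((hCamb w hwC) q hq).1 hadj.symm
      have hSC : ∀ s ∈ S, s ∉ C := by
        intro s hsS hsC
        obtain ⟨q, hqQ, himp⟩ := hSQ s hsS
        have h2 := (hCamb s hsC) q hqQ
        exact h2.2 (himp h2.1)
      let G2 : SimpleGraph V := {
        Adj := fun p q => p ≠ q ∧ ((G.Adj p q ∧ p ∈ CN ∧ q ∈ CN) ∨ (p ∈ NC ∧ q ∈ NC))
        symm := by
          refine ⟨?_⟩; rintro p q ⟨hne, h⟩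
          refine ⟨hne.symm, ?_⟩
          rcases h with ⟨h1, h2, h3⟩ | ⟨h1, h2⟩
          · exact Or.inl ⟨h1.symm, h3, h2⟩
          · exact Or.inr ⟨h2, h1⟩
        loopless := ⟨fun p h => h.1 rfl⟩ }
      have hNpres : ∀ w ∈ C, ∀ t, (G2.Adj w t ↔ G.Adj w t) := by
        intro w hwC t
        constructor
        · rintro ⟨hne, ⟨h, _, _⟩ | ⟨hwNC, _⟩⟩
          · exact h
          · exact absurd hwC hwNC.1
        · intro h
          exact ⟨h.ne, Or.inl ⟨h, Or.inl hwC, hclose w hwC t h⟩⟩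
      have hsupp2sub : supp G2 ⊆ supp G := by
        intro s hs
        obtain ⟨t, ht⟩ := mem_supp.1 hs
        rcases ht.2 with ⟨h, _, _⟩ | ⟨hsNC, _⟩
        · exact mem_supp.2 ⟨t, h⟩
        · obtain ⟨_, w, hwC, hadj⟩ := hsNC
          exact mem_supp.2 ⟨w, hadj.symm⟩
      obtain ⟨q0, hq0Q⟩ := hQne
      have hq0G : q0 ∈ supp G := mem_supp.2 (hQsupp q0 hq0Q)
      have hq0G2 : q0 ∉ supp G2 := by
        intro h
        obtain ⟨t, ht⟩ := mem_supp.1 h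
        rcases ht.2 with ⟨_, hq0CN, _⟩ | ⟨hq0NC, _⟩
        · exact hq0CN.elim (hQC q0 hq0Q) (hQNC q0 hq0Q)
        · exact hQNC q0 hq0Q hq0NC
      have hcard2 : (supp G2).card ≤ n := by
        have hlt : (supp G2).card < (supp G).card :=
          Finset.card_lt_card ⟨hsupp2sub, fun h => hq0G2 (h hq0G)⟩
        omega
      obtain ⟨u', v', hadj2, hu'S2, hv'S2, hAv2⟩ := ih G2 NC hcard2
        (fun s hs t ht hne => ⟨hne, Or.inr ⟨hs, ht⟩⟩)
        (by intro s hs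
            obtain ⟨hsC, w, hwC, hadj⟩ := hs
            exact ⟨w, ⟨fun h => hsC (h ▸ hwC), Or.inl ⟨hadj.symm, Or.inr ⟨hsC, w, hwC, hadj⟩, Or.inl hwC⟩⟩⟩)
        ⟨c, d, ⟨hcd.ne, Or.inl ⟨hcd, Or.inl hcC, Or.inl hdC⟩⟩, (fun h => h.1 hcC), (fun h => h.1 hdC)⟩
      have hu'C : u' ∈ C := by
        rcases hadj2.2 with ⟨_, hCNm, _⟩ | ⟨hNCm, _⟩
        · exact hCNm.resolve_right hu'S2
        · exact absurd hNCm hu'S2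
      have hv'C : v' ∈ C := by
        rcases hadj2.2 with ⟨_, _, hCNm⟩ | ⟨_, hNCm⟩
        · exact hCNm.resolve_right hv'S2
        · exact absurd hNCm hv'S2
      have huv' : G.Adj u' v' := (hNpres u' hu'C v').1 hadj2
      refine ⟨u', v', huv', fun hS => hSC u' hS hu'C, fun hS => hSC v' hS hv'C, ?_⟩
      intro x y hval
      obtain ⟨huvv, hux, hvy, hvx, huy, hxy, hxv, hyu, hxyne⟩ := hval
      have hQM : ∀ q ∈ Q, q ∈ Mset G u' v' := by
        intro q hq
        have h1 := (hCamb u' hu'C) q hq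
        have h2 := (hCamb v' hv'C) q hq
        exact ⟨fun h => h1.1 h.symm, fun h => h2.1 h.symm,
          fun h => h1.2 h.symm, fun h => h2.2 h.symm⟩
      show (RG G ({x, y} ∪ Mset G u' v')).Reachable x y
      set sset : Set V := {x, y} ∪ Mset G u' v' with hsset
      have hxs : x ∈ sset := Set.mem_union_left _ (by simp)
      have hys : y ∈ sset := Set.mem_union_left _ (by simp)
      by_cases hNCxy : x ∈ NC ∧ y ∈ NC
      · obtain ⟨q1, hq1, hq1x⟩ := hNCamb x hNCxy.1
        obtain ⟨q2, hq2, hq2y⟩ := hNCamb y hNCxy.2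
        have hq1s : q1 ∈ sset := Set.mem_union_right _ (hQM q1 hq1)
        have hq2s : q2 ∈ sset := Set.mem_union_right _ (hQM q2 hq2)
        have hmid : (RG G sset).Reachable q1 q2 := by
          rcases eq_or_ne q1 q2 with rfl | hne2
          · exact Reachable.refl _
          · exact (RG_adj.2 ⟨hQclq q1 hq1 q2 hq2 hne2, hq1s, hq2s⟩).reachable
        exact ((RG_adj.2 ⟨hq1x.symm, hxs, hq1s⟩).reachable.trans hmid).trans
          (RG_adj.2 ⟨hq2y, hq2s, hys⟩).reachable
      · have hval2 : Valid G2 u' v' x y := by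
          refine ⟨(hNpres u' hu'C v').2 huvv, (hNpres u' hu'C x).2 hux, (hNpres v' hv'C y).2 hvy,
            fun h => hvx ((hNpres v' hv'C x).1 h), fun h => huy ((hNpres u' hu'C y).1 h),
            ?_, hxv, hyu, hxyne⟩
          rintro ⟨hne, ⟨h, _, _⟩ | ⟨h1, h2⟩⟩
          · exact hxy h
          · exact hNCxy ⟨h1, h2⟩
        have hcl2 := hAv2 x y hval2
        have hMeq : Mset G2 u' v' = Mset G u' v' := by
          ext w
          constructor
          · rintro ⟨h1, h2, h3, h4⟩
            exact ⟨fun h => h1 ((hNpres u' hu'C w).2 h), fun h => h2 ((hNpres v' hv'C w).2 h), h3, h4⟩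
          · rintro ⟨h1, h2, h3, h4⟩
            exact ⟨fun h => h1 ((hNpres u' hu'C w).1 h), fun h => h2 ((hNpres v' hv'C w).1 h), h3, h4⟩
        have hcl2' : (RG G2 sset).Reachable x y := by
          have : Closes G2 u' v' x y = (RG G2 ({x, y} ∪ Mset G2 u' v')).Reachable x y := rfl
          rw [this, hMeq] at hcl2
          exact hcl2
        refine reach_of_adj_imp ?_ hcl2'
        rintro p q ⟨⟨hne, hor⟩, hps, hqs⟩
        rcases hor with ⟨h, _, _⟩ | ⟨hpNC, hqNC⟩
        · exact (RG_adj.2 ⟨h, hps, hqs⟩).reachable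
        · obtain ⟨q1, hq1, hq1p⟩ := hNCamb p hpNC
          obtain ⟨q2, hq2, hq2q⟩ := hNCamb q hqNC
          have hq1s : q1 ∈ sset := Set.mem_union_right _ (hQM q1 hq1)
          have hq2s : q2 ∈ sset := Set.mem_union_right _ (hQM q2 hq2)
          have hmid : (RG G sset).Reachable q1 q2 := by
            rcases eq_or_ne q1 q2 with rfl | hne2
            · exact Reachable.refl _
            · exact (RG_adj.2 ⟨hQclq q1 hq1 q2 hq2 hne2, hq1s, hq2s⟩).reachable
          exact ((RG_adj.2 ⟨hq1p.symm, hps, hq1s⟩).reachable.trans hmid).trans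
            (RG_adj.2 ⟨hq2q, hq2s, hqs⟩).reachable

lemma Mset_symm {G : SimpleGraph V} {u v : V} : Mset G u v = Mset G v u := by
  ext w
  exact ⟨fun ⟨h1, h2, h3, h4⟩ => ⟨h2, h1, h4, h3⟩, fun ⟨h1, h2, h3, h4⟩ => ⟨h2, h1, h4, h3⟩⟩

lemma EAvoid_symm {G : SimpleGraph V} {u v : V} (h : EAvoid G u v) : EAvoid G v u := by
  intro x y hval
  obtain ⟨hvu, hvx, huy, hnux, hnvy, hxy, hxu, hyv, hxyne⟩ := hval
  have hval' : Valid G u v y x :=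
    ⟨hvu.symm, huy, hvx, hnvy, hnux, fun hh => hxy hh.symm, hyv, hxu, hxyne.symm⟩
  have hcl := h y x hval'
  have hseq : ({y, x} : Set V) ∪ Mset G u v = {x, y} ∪ Mset G v u := by
    rw [Set.pair_comm, Mset_symm]
  show (RG G ({x, y} ∪ Mset G v u)).Reachable x y
  rw [← hseq]
  exact hcl.symm

lemma reach_map {G : SimpleGraph V} (φ : G ≃g G) {s t : Set V}
    (hmem : ∀ z ∈ s, (φ z : V) ∈ t) :
    ∀ {p q : V}, (RG G s).Walk p q → (RG G t).Reachable (φ p) (φ q) := by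
  intro p q w
  induction w with
  | nil => exact Reachable.refl _
  | cons hadj rest ih =>
    exact (RG_adj.2 ⟨φ.map_adj_iff.2 hadj.1, hmem _ hadj.2.1,
      hmem _ hadj.2.2⟩).reachable.trans ih

lemma EAvoid_map {G : SimpleGraph V} (φ : G ≃g G) {a b : V} (h : EAvoid G a b) :
    EAvoid G (φ a) (φ b) := by
  intro x y hval
  obtain ⟨h1, h2, h3, h4, h5, h6, h7, h8, h9⟩ := hval
  have hfx : (φ (φ.symm x) : V) = x := φ.apply_symm_apply x
  have hfy : (φ (φ.symm y) : V) = y := φ.apply_symm_apply y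
  have hval0 : Valid G a b (φ.symm x) (φ.symm y) := by
    refine ⟨φ.map_adj_iff.1 h1, φ.map_adj_iff.1 (by rw [hfx]; exact h2),
      φ.map_adj_iff.1 (by rw [hfy]; exact h3), ?_, ?_, ?_, ?_, ?_, ?_⟩
    · intro hh; exact h4 (by rw [← hfx]; exact φ.map_adj_iff.2 hh)
    · intro hh; exact h5 (by rw [← hfy]; exact φ.map_adj_iff.2 hh)
    · intro hh; exact h6 (by rw [← hfx, ← hfy]; exact φ.map_adj_iff.2 hh)
    · intro hh
      exact h7 (by rw [← hfx]; exact congrArg (fun w => (φ w : V)) hh)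
    · intro hh
      exact h8 (by rw [← hfy]; exact congrArg (fun w => (φ w : V)) hh)
    · intro hh
      exact h9 (by rw [← hfx, ← hfy]; exact congrArg (fun w => (φ w : V)) hh)
  obtain ⟨w0⟩ := h (φ.symm x) (φ.symm y) hval0
  have hres := reach_map φ (s := {φ.symm x, φ.symm y} ∪ Mset G a b)
      (t := {x, y} ∪ Mset G (φ a) (φ b)) ?_ w0
  · show (RG G ({x, y} ∪ Mset G (φ a) (φ b))).Reachable x y
    rw [hfx, hfy] at hres
    exact hres
  · intro z hz
    rcases hz with hz | hz
    · simp only [Set.mem_insert_iff, Set.mem_singleton_iff] at hz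
      rcases hz with rfl | rfl
      · exact Set.mem_union_left _ (by rw [hfx]; simp)
      · exact Set.mem_union_left _ (by rw [hfy]; simp)
    · obtain ⟨m1, m2, m3, m4⟩ := hz
      refine Set.mem_union_right _ ⟨?_, ?_, ?_, ?_⟩
      · intro hh; exact m1 (φ.map_adj_iff.1 hh)
      · intro hh; exact m2 (φ.map_adj_iff.1 hh)
      · intro hh; exact m3 (φ.toEquiv.injective hh)
      · intro hh; exact m4 (φ.toEquiv.injective hh)

lemma RG_le {G : SimpleGraph V} {s : Set V} : RG G s ≤ G := by intro p q h; exact h.1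

lemma build_cycle {G : SimpleGraph V} {u v x y : V} (hval : Valid G u v x y)
    (hcl : Closes G u v x y) :
    ∃ c : G.Walk u u, (c.IsCycle ∧ ∀ p ∈ c.support, ∀ q ∈ c.support,
        G.Adj p q → s(p, q) ∈ c.edges) ∧
      s(x, u) ∈ c.edges ∧ s(u, v) ∈ c.edges ∧ s(v, y) ∈ c.edges := by
  obtain ⟨huv, hux, hvy, hvx, huy, hxy, hxv, hyu, hxyne⟩ := hval
  set sset : Set V := {x, y} ∪ Mset G u v with hsset
  obtain ⟨w, hmin⟩ := exists_min_walk hcl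
  have hpath := min_walk_isPath w hmin
  have hxs : x ∈ sset := Set.mem_union_left _ (by simp)
  have hsupp : ∀ z ∈ w.support, z ∈ sset := RG_walk_support w hxs
  have hedge : ∀ e ∈ w.edges, e ∈ G.edgeSet := by
    intro e he
    exact edgeSet_mono RG_le (w.edges_subset_edgeSet he)
  set p' : G.Walk x y := w.transfer G hedge with hp'
  have hps : p'.support = w.support := w.support_transfer hedge
  have hpe : p'.edges = w.edges := w.edges_transfer hedge
  have hus : u ∉ sset := by
    intro hu
    rcases hu with hu | hu
    · simp only [Set.mem_insert_iff, Set.mem_singleton_iff] at hu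
      rcases hu with h | h
      · rw [h] at hux; exact G.loopless.irrefl x hux
      · exact hyu h.symm
    · exact hu.2.2.1 rfl
  have hvs : v ∉ sset := by
    intro hv
    rcases hv with hv | hv
    · simp only [Set.mem_insert_iff, Set.mem_singleton_iff] at hv
      rcases hv with h | h
      · exact hxv h.symm
      · rw [h] at hvy; exact G.loopless.irrefl y hvy
    · exact hv.2.2.2 rfl
  have hyv' : G.Adj y v := hvy.symm
  have hvu' : G.Adj v u := huv.symm
  set tailw : G.Walk y u := Walk.cons hyv' (Walk.cons hvu' Walk.nil) with htailw
  set c : G.Walk u u := Walk.cons hux (p'.append tailw) with hcdef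
  have hcsup : c.support = u :: (p'.support ++ [v, u]) := by
    rw [hcdef, Walk.support_cons, htailw]
    rw [Walk.support_append]
    simp
  have hced : c.edges = s(u, x) :: (p'.edges ++ [s(y, v), s(v, u)]) := by
    rw [hcdef, Walk.edges_cons, htailw, Walk.edges_append]
    simp
  have hup' : u ∉ p'.support := fun h => hus (hsupp u (by rwa [hps] at h))
  have hvp' : v ∉ p'.support := fun h => hvs (hsupp v (by rwa [hps] at h))
  have hnodups : p'.support.Nodup := by
    rw [hps]; exact hpath.support_nodup
  have hnodupe : p'.edges.Nodup := by
    rw [hpe]; exact hpath.isTrail.edges_nodup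
  have heux : s(u, x) ∉ p'.edges := fun h => hup' (p'.fst_mem_support_of_mem_edges h)
  have heyv : s(y, v) ∉ p'.edges := fun h => hvp' (p'.snd_mem_support_of_mem_edges h)
  have hevu : s(v, u) ∉ p'.edges := fun h => hvp' (p'.fst_mem_support_of_mem_edges h)
  have hne1 : s(u, x) ≠ s(y, v) := by
    intro h
    rcases Sym2.eq_iff.1 h with ⟨h1, h2⟩ | ⟨h1, h2⟩
    · exact hyu h1.symm
    · rw [h1] at huv; exact G.loopless.irrefl v huv
  have hne2 : s(u, x) ≠ s(v, u) := by
    intro h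
    rcases Sym2.eq_iff.1 h with ⟨h1, h2⟩ | ⟨h1, h2⟩
    · rw [h1] at huv; exact G.loopless.irrefl v huv
    · exact hxv h2
  have hne3 : s(y, v) ≠ s(v, u) := by
    intro h
    rcases Sym2.eq_iff.1 h with ⟨h1, h2⟩ | ⟨h1, h2⟩
    · rw [h1] at hvy; exact G.loopless.irrefl v hvy
    · exact hyu h1
  have htrail : c.edges.Nodup := by
    rw [hced]
    refine List.Nodup.cons ?_ ?_
    · intro hmem
      rcases List.mem_append.1 hmem with h | h
      · exact heux h
      · rcases List.mem_cons.1 h with h' | h'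
        · exact hne1 h'
        · rcases List.mem_singleton.1 h' with h''
          exact hne2 h''
    · refine List.Nodup.append hnodupe ?_ ?_
      · simp [hne3]
      · intro e he hemem
        rcases List.mem_cons.1 hemem with h' | h'
        · rw [h'] at he; exact heyv he
        · rcases List.mem_singleton.1 h' with h''
          rw [h''] at he; exact hevu he
  have hstail : c.support.tail.Nodup := by
    rw [hcsup]
    simp only [List.tail_cons]
    refine List.Nodup.append hnodups ?_ ?_
    · simp [huv.ne']
    · intro z hz hz2
      rcases List.mem_cons.1 hz2 with h' | h'
      · rw [h'] at hz; exact hvp' hz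
      · rcases List.mem_singleton.1 h' with h''
        rw [h''] at hz; exact hup' hz
  have hmm1 : s(u, x) ∈ c.edges := by rw [hced]; simp
  have hmm2 : s(v, u) ∈ c.edges := by rw [hced]; simp
  have hmm3 : s(y, v) ∈ c.edges := by rw [hced]; simp
  have hmemc : ∀ z ∈ c.support, z = u ∨ z = v ∨ z ∈ p'.support := by
    intro z hz
    rw [hcsup] at hz
    simp only [List.mem_cons, List.mem_append, List.mem_singleton] at hz
    tauto
  have hchord : ∀ p ∈ c.support, ∀ q ∈ c.support, G.Adj p q → s(p, q) ∈ c.edges := by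
    intro p hp q hq hadj
    rcases hmemc p hp with rfl | rfl | hpp
    · rcases hmemc q hq with rfl | rfl | hqq
      · exact absurd hadj (G.loopless.irrefl _)
      · rw [Sym2.eq_swap]; exact hmm2
      · have hq2 := hsupp q (by rwa [hps] at hqq)
        rcases hq2 with hq2 | hq2
        · simp only [Set.mem_insert_iff, Set.mem_singleton_iff] at hq2
          rcases hq2 with h | h
          · rw [h]; exact hmm1
          · rw [h] at hadj; exact absurd hadj huy
        · exact absurd hadj (fun h => hq2.1 h)
    · rcases hmemc q hq with rfl | rfl | hqq
      · exact hmm2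
      · exact absurd hadj (G.loopless.irrefl _)
      · have hq2 := hsupp q (by rwa [hps] at hqq)
        rcases hq2 with hq2 | hq2
        · simp only [Set.mem_insert_iff, Set.mem_singleton_iff] at hq2
          rcases hq2 with h | h
          · rw [h] at hadj; exact absurd hadj hvx
          · rw [h, Sym2.eq_swap]; exact hmm3
        · exact absurd hadj (fun h => hq2.2.1 h)
    · rcases hmemc q hq with rfl | rfl | hqq
      · have hp2 := hsupp p (by rwa [hps] at hpp)
        rcases hp2 with hp2 | hp2
        · simp only [Set.mem_insert_iff, Set.mem_singleton_iff] at hp2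
          rcases hp2 with h | h
          · rw [h, Sym2.eq_swap]; exact hmm1
          · rw [h] at hadj; exact absurd hadj.symm huy
        · exact absurd hadj.symm (fun h => hp2.1 h)
      · have hp2 := hsupp p (by rwa [hps] at hpp)
        rcases hp2 with hp2 | hp2
        · simp only [Set.mem_insert_iff, Set.mem_singleton_iff] at hp2
          rcases hp2 with h | h
          · rw [h] at hadj; exact absurd hadj.symm hvx
          · rw [h]; exact hmm3
        · exact absurd hadj.symm (fun h => hp2.2.1 h)
      · have hradj : (RG G sset).Adj p q :=
          ⟨hadj, hsupp p (by rwa [hps] at hpp), hsupp q (by rwa [hps] at hqq)⟩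
        have hc := min_walk_chord w hmin p q (by rwa [hps] at hpp) (by rwa [hps] at hqq) hradj
        rw [hced]
        exact List.mem_cons_of_mem _ (List.mem_append_left _ (by rw [hpe]; exact hc))
  refine ⟨c, ⟨?_, hchord⟩, ?_, ?_, ?_⟩
  · rw [Walk.isCycle_def]
    refine ⟨(Walk.isTrail_def c).2 htrail, ?_, hstail⟩
    rw [hcdef]
    intro hnil
    have := congrArg Walk.length hnil
    simp at this
  · rw [Sym2.eq_swap]; exact hmm1
  · rw [Sym2.eq_swap]; exact hmm2
  · rw [Sym2.eq_swap]; exact hmm3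

end Stmt19


/-- In a finite edge-transitive graph, every induced path on four vertices closes to an
induced cycle. -/
theorem stmt_19 {V : Type*} [Fintype V] (G : SimpleGraph V)
    (hET : ∀ e ∈ G.edgeSet, ∀ f ∈ G.edgeSet, ∃ φ : G ≃g G, e.map φ = f) :
    ∀ x u v y : V, G.Adj x u → G.Adj u v → G.Adj v y →
      x ≠ v → y ≠ u → x ≠ y → ¬ G.Adj x v → ¬ G.Adj u y → ¬ G.Adj x y →
      ∃ c : G.Walk u u, IsInducedCycle G c ∧
        s(x, u) ∈ c.edges ∧ s(u, v) ∈ c.edges ∧ s(v, y) ∈ c.edges := by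
  intro x u v y hxu huv hvy hxv hyu hxy hnxv hnuy hnxy
  obtain ⟨a, b, hab, -, -, hAv⟩ := Stmt19.exists_avoid (Stmt19.supp G).card G ∅ le_rfl
    (by simp) (by simp) ⟨u, v, huv, Set.notMem_empty u, Set.notMem_empty v⟩
  obtain ⟨φ, hφ⟩ := hET s(a, b) (G.mem_edgeSet.2 hab) s(u, v) (G.mem_edgeSet.2 huv)
  have hmap : s((φ a : V), (φ b : V)) = s(u, v) := by
    simpa [Sym2.map_pair_eq] using hφ
  have hEuv : Stmt19.EAvoid G u v := by
    rcases Sym2.eq_iff.1 hmap with ⟨h1, h2⟩ | ⟨h1, h2⟩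
    · have := Stmt19.EAvoid_map φ hAv
      rw [h1, h2] at this
      exact this
    · have := Stmt19.EAvoid_map φ hAv
      rw [h1, h2] at this
      exact Stmt19.EAvoid_symm this
  have hval : Stmt19.Valid G u v x y :=
    ⟨huv, hxu.symm, hvy, fun h => hnxv h.symm, hnuy, hnxy, hxv, hyu, hxy⟩
  obtain ⟨c, hc, h1, h2, h3⟩ := Stmt19.build_cycle hval (hEuv x y hval)
  exact ⟨c, hc, h1, h2, h3⟩
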